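/- Let K be a real symmetric n×n matrix with eigenvalues λ₁ ≥ λ₂ ≥ ⋯ ≥ λₙ (listed in decreasing order with multiplicity). Then for every real n×k matrix H satisfying HᵀH = Iₖ, one has tr(HᵀKH) ≤ λ₁ + λ₂ + ⋯ + λₖ. -/
import Mathlib


open Matrix

private lemma sum_ite_lt' {n k : ℕ} (hk : k ≤ n) (f : Fin n → ℝ) :
    ∑ i : Fin n, (if (i : ℕ) < k then f i else 0) = ∑ j : Fin k, f (Fin.castLE hk j) := by
  rw [← Finset.sum_filter]
  have hset : Finset.univ.filter (fun i : Fin n => (i : ℕ) < k)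
      = Finset.univ.map (Fin.castLEEmb hk) := by
    ext i
    simp only [Finset.mem_filter, Finset.mem_univ, true_and, Finset.mem_map, Fin.castLEEmb_apply]
    constructor
    · intro h
      exact ⟨⟨(i : ℕ), h⟩, rfl⟩
    · rintro ⟨a, rfl⟩
      exact a.isLt
  rw [hset, Finset.sum_map]
  rfl

private lemma abel_bound {n k : ℕ} (hk : k ≤ n) (lam s : Fin n → ℝ) (hlam : Antitone lam)
    (h0 : ∀ i, 0 ≤ s i) (h1 : ∀ i, s i ≤ 1) (hsum : ∑ i, s i = (k : ℝ)) :
    ∑ i, lam i * s i ≤ ∑ j : Fin k, lam (Fin.castLE hk j) := by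
  rcases Nat.eq_zero_or_pos n with hn | hn
  · subst hn
    interval_cases k
    simp
  obtain ⟨c, hc1, hc2⟩ : ∃ c : ℝ, (∀ i : Fin n, (i : ℕ) < k → c ≤ lam i) ∧
      (∀ i : Fin n, k ≤ (i : ℕ) → lam i ≤ c) := by
    rcases lt_or_eq_of_le hk with h | h
    · refine ⟨lam ⟨k, h⟩, fun i hi => hlam (by simpa [Fin.le_def] using hi.le), fun i hi => hlam (by simpa [Fin.le_def] using hi)⟩
    · refine ⟨lam ⟨n - 1, by omega⟩, fun i _ => hlam (by simp [Fin.le_def]; omega), fun i hi => absurd (i.isLt) (by omega)⟩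
  have key : ∀ i ∈ Finset.univ, lam i * s i ≤ (if (i : ℕ) < k then lam i - c else 0) + c * s i := by
    intro i _
    split
    · next h => nlinarith [hc1 i h, h1 i, h0 i]
    · next h => nlinarith [hc2 i (by omega), h0 i]
  calc ∑ i, lam i * s i
      ≤ ∑ i : Fin n, ((if (i : ℕ) < k then lam i - c else 0) + c * s i) :=
        Finset.sum_le_sum key
    _ = (∑ i : Fin n, if (i : ℕ) < k then lam i - c else 0) + c * ∑ i, s i := by
        rw [Finset.sum_add_distrib, Finset.mul_sum]
    _ = (∑ j : Fin k, (lam (Fin.castLE hk j) - c)) + c * k := by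
        rw [sum_ite_lt' hk (fun i => lam i - c), hsum]
    _ = ∑ j : Fin k, lam (Fin.castLE hk j) := by
        rw [Finset.sum_sub_distrib, Finset.sum_const, Finset.card_univ, Fintype.card_fin]
        ring

theorem kyFan_upper_bound {n k : ℕ} (hk : k ≤ n)
    (K U : Matrix (Fin n) (Fin n) ℝ) (lam : Fin n → ℝ)
    (hKsymm : K.IsSymm)
    (hU : Uᵀ * U = 1) (hU' : U * Uᵀ = 1)
    (hspec : K = U * Matrix.diagonal lam * Uᵀ)
    (hlam : Antitone lam) :
    ∀ H : Matrix (Fin n) (Fin k) ℝ, Hᵀ * H = 1 →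
      (Hᵀ * K * H).trace ≤ ∑ i : Fin k, lam (Fin.castLE hk i) := by
  intro H hH
  set G : Matrix (Fin n) (Fin k) ℝ := Uᵀ * H with hGdef
  have hG : Gᵀ * G = 1 := by
    simp only [hGdef, transpose_mul, transpose_transpose, Matrix.mul_assoc]
    rw [← Matrix.mul_assoc U, hU', Matrix.one_mul, hH]
  set P : Matrix (Fin n) (Fin n) ℝ := G * Gᵀ with hPdef
  have hPsymm : Pᵀ = P := by simp [hPdef, transpose_mul]
  have hPP : P * P = P := by
    calc P * P = G * (Gᵀ * G) * Gᵀ := by simp [hPdef, Matrix.mul_assoc]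
    _ = P := by rw [hG, Matrix.mul_one]
  have hdiag0 : ∀ i, 0 ≤ P i i := by
    intro i
    rw [hPdef, Matrix.mul_apply]
    exact Finset.sum_nonneg fun j _ => mul_self_nonneg _
  have hdiag1 : ∀ i, P i i ≤ 1 := by
    intro i
    have h := congrArg (fun M : Matrix (Fin n) (Fin n) ℝ => M i i) hPP
    simp only [Matrix.mul_apply] at h
    have hterm : ∀ j : Fin n, 0 ≤ P i j * P j i := by
      intro j
      have hji : P j i = P i j := congrFun (congrFun hPsymm i) j
      rw [hji]; exact mul_self_nonneg _
    have hle : P i i * P i i ≤ ∑ j, P i j * P j i :=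
      Finset.single_le_sum (fun j _ => hterm j) (Finset.mem_univ i)
    rw [h] at hle
    nlinarith [hdiag0 i]
  have hsum : ∑ i, P i i = (k : ℝ) := by
    have h := Matrix.trace_mul_comm G Gᵀ
    rw [hG, Matrix.trace_one] at h
    have : P.trace = ∑ i, P i i := rfl
    rw [← this, h]
    simp
  have hKH : (Hᵀ * K * H).trace = ∑ i, lam i * P i i := by
    have h1 : Hᵀ * K * H = Gᵀ * (Matrix.diagonal lam) * G := by
      rw [hspec, hGdef]
      simp only [transpose_mul, transpose_transpose, Matrix.mul_assoc]
    rw [h1, Matrix.mul_assoc, Matrix.trace_mul_comm Gᵀ (Matrix.diagonal lam * G),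
        Matrix.mul_assoc (Matrix.diagonal lam) G Gᵀ]
    show Matrix.trace (Matrix.diagonal lam * P) = _
    simp [Matrix.trace, Matrix.diag, Matrix.diagonal_mul]
  rw [hKH]
  exact abel_bound hk lam (fun i => P i i) hlam hdiag0 hdiag1 hsum
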